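/- Let A = U_A Σ_A V_A^T and B = U_B Σ_B V_B^T be (compact) singular value decompositions, and let P be an n×n permutation matrix. Then ‖A‖_* + ‖B‖_* ≥ ‖[A, P B]‖_* ≥ (‖A‖_* + ‖B‖_*)/‖[U_A V_A^T, P U_B V_B^T]‖ ≥ (‖A‖_* + ‖B‖_*)/√2, where ‖·‖ is the spectral norm and ‖·‖_* the nuclear norm. -/

import Mathlib

open Matrix

/-- The nuclear norm of a real matrix: the sum of its singular values. -/
noncomputable def nuclearNorm {m n : Type*} [Fintype m] [Fintype n] [DecidableEq n]
    (A : Matrix m n ℝ) : ℝ :=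
  ∑ i, Real.sqrt ((Matrix.isHermitian_conjTranspose_mul_self A).eigenvalues i)

/-- The spectral (operator) norm of a real matrix: its largest singular value. -/
noncomputable def matSpectralNorm {m n : Type*} [Fintype m] [Fintype n] [DecidableEq n]
    (A : Matrix m n ℝ) : ℝ :=
  Real.sqrt (⨆ i, (Matrix.isHermitian_conjTranspose_mul_self A).eigenvalues i)

set_option linter.unusedSectionVars false
namespace NukeProof
variable {k l : Type*} [Fintype k] [Fintype l] [DecidableEq k] [DecidableEq l]

lemma conjT (M : Matrix k l ℝ) : Mᴴ = Mᵀ := conjTranspose_eq_transpose_of_trivial M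

noncomputable def ev (M : Matrix k l ℝ) : l → ℝ :=
  (Matrix.isHermitian_conjTranspose_mul_self M).eigenvalues

noncomputable def Qm (M : Matrix k l ℝ) : Matrix l l ℝ :=
  ((Matrix.isHermitian_conjTranspose_mul_self M).eigenvectorUnitary : Matrix l l ℝ)

lemma ev_nonneg (M : Matrix k l ℝ) (i : l) : 0 ≤ ev M i :=
  Matrix.eigenvalues_conjTranspose_mul_self_nonneg M i

lemma Qm_orth (M : Matrix k l ℝ) : (Qm M)ᵀ * Qm M = 1 := by
  have h := ((Matrix.isHermitian_conjTranspose_mul_self M).eigenvectorUnitary).2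
  rw [Matrix.mem_unitaryGroup_iff'] at h
  simpa [Qm, star_eq_conjTranspose, conjT] using h

lemma Qm_orth' (M : Matrix k l ℝ) : Qm M * (Qm M)ᵀ = 1 :=
  mul_eq_one_comm.mp (Qm_orth M)

lemma diag_eq (M : Matrix k l ℝ) :
    (Qm M)ᵀ * (Mᵀ * M) * Qm M = diagonal (ev M) := by
  have h := (Matrix.isHermitian_conjTranspose_mul_self M).conjStarAlgAut_star_eigenvectorUnitary
  rw [Unitary.conjStarAlgAut_apply] at h
  simpa [Qm, ev, conjT, star_eq_conjTranspose, RCLike.ofReal_real_eq_id] using h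

lemma H_decomp (M : Matrix k l ℝ) :
    Mᵀ * M = Qm M * diagonal (ev M) * (Qm M)ᵀ := by
  have := congrArg (fun X => Qm M * X * (Qm M)ᵀ) (diag_eq M)
  rw [← this]
  rw [show Qm M * ((Qm M)ᵀ * (Mᵀ * M) * Qm M) * (Qm M)ᵀ
      = (Qm M * (Qm M)ᵀ) * (Mᵀ * M) * (Qm M * (Qm M)ᵀ) by simp only [mul_assoc], Qm_orth' M]
  simp


lemma dot_self_nonneg (v : k → ℝ) : 0 ≤ v ⬝ᵥ v :=
  Finset.sum_nonneg fun i _ => mul_self_nonneg _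

lemma dotProduct_le_sqrt (v w : k → ℝ) :
    v ⬝ᵥ w ≤ Real.sqrt (v ⬝ᵥ v) * Real.sqrt (w ⬝ᵥ w) := by
  have h := Finset.sum_mul_sq_le_sq_mul_sq Finset.univ v w
  have h2 : (v ⬝ᵥ w) ^ 2 ≤ (v ⬝ᵥ v) * (w ⬝ᵥ w) := by
    simpa [dotProduct, pow_two] using h
  calc v ⬝ᵥ w ≤ |v ⬝ᵥ w| := le_abs_self _
    _ = Real.sqrt ((v ⬝ᵥ w) ^ 2) := (Real.sqrt_sq_eq_abs _).symm
    _ ≤ Real.sqrt ((v ⬝ᵥ v) * (w ⬝ᵥ w)) := Real.sqrt_le_sqrt h2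
    _ = _ := Real.sqrt_mul (dot_self_nonneg v) _

lemma dot_mulVec_self (M : Matrix k l ℝ) (z : l → ℝ) :
    (M *ᵥ z) ⬝ᵥ (M *ᵥ z) = z ⬝ᵥ ((Mᵀ * M) *ᵥ z) := by
  rw [← mulVec_mulVec]
  conv_rhs => rw [dotProduct_mulVec, vecMul_transpose]

lemma quad_conj (Q : Matrix l l ℝ) (d : l → ℝ) (z : l → ℝ) :
    z ⬝ᵥ ((Q * diagonal d * Qᵀ) *ᵥ z) = ∑ i, d i * ((Qᵀ *ᵥ z) i) ^ 2 := by
  rw [← mulVec_mulVec, ← mulVec_mulVec, dotProduct_mulVec, ← mulVec_transpose]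
  simp [dotProduct, mulVec_diagonal]
  exact Finset.sum_congr rfl fun i _ => by ring

lemma dot_conj (Q : Matrix l l ℝ) (hQ : Q * Qᵀ = 1) (z : l → ℝ) :
    z ⬝ᵥ z = ∑ i, ((Qᵀ *ᵥ z) i) ^ 2 := by
  have h : z ⬝ᵥ ((Q * diagonal (fun _ => (1:ℝ)) * Qᵀ) *ᵥ z) = ∑ i, ((Qᵀ *ᵥ z) i) ^ 2 := by
    rw [quad_conj]; simp
  rw [← h]
  simp [diagonal_one, hQ]

-- columns of Qm
noncomputable def qcol (M : Matrix k l ℝ) (i : l) : l → ℝ := fun r => Qm M r i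

lemma col_unit {a b : Type*} [Fintype a] [Fintype b] [DecidableEq b]
    (V : Matrix a b ℝ) (hV : Vᵀ * V = 1) (i : b) :
    (fun r => V r i) ⬝ᵥ (fun r => V r i) = 1 := by
  have := congrFun (congrFun hV i) i
  simpa [mul_apply, one_apply, dotProduct, transpose_apply] using this

lemma qcol_unit (M : Matrix k l ℝ) (i : l) : qcol M i ⬝ᵥ qcol M i = 1 :=
  col_unit (Qm M) (Qm_orth M) i

lemma HQ (M : Matrix k l ℝ) : (Mᵀ * M) * Qm M = Qm M * diagonal (ev M) := by
  rw [H_decomp M, mul_assoc, mul_assoc, Qm_orth M, mul_one]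

lemma mulVec_qcol_quad (M : Matrix k l ℝ) (i : l) :
    (M *ᵥ qcol M i) ⬝ᵥ (M *ᵥ qcol M i) = ev M i := by
  rw [dot_mulVec_self]
  have hcol : (Mᵀ * M) *ᵥ qcol M i = fun r => Qm M r i * ev M i := by
    ext r
    have := congrFun (congrFun (HQ M) r) i
    simpa [mul_apply, mulVec, dotProduct, qcol, diagonal, mul_comm] using this
  rw [hcol]
  have : (qcol M i ⬝ᵥ fun r => Qm M r i * ev M i) = (qcol M i ⬝ᵥ qcol M i) * ev M i := by
    simp [dotProduct, Finset.sum_mul, qcol, mul_assoc]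
  rw [this, qcol_unit, one_mul]

/-- nuclearNorm unfolds -/
lemma nuclearNorm_def (M : Matrix k l ℝ) : nuclearNorm M = ∑ i, Real.sqrt (ev M i) := rfl

lemma nuclearNorm_nonneg (M : Matrix k l ℝ) : 0 ≤ nuclearNorm M :=
  Finset.sum_nonneg fun i _ => Real.sqrt_nonneg _

lemma matSpectralNorm_def (M : Matrix k l ℝ) : matSpectralNorm M = Real.sqrt (⨆ i, ev M i) := rfl

lemma matSpectralNorm_nonneg (M : Matrix k l ℝ) : 0 ≤ matSpectralNorm M := Real.sqrt_nonneg _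

/-- Key trace lemma. -/
lemma trace_transpose_mul_le (W M : Matrix k l ℝ) {c : ℝ} (hc : 0 ≤ c)
    (hW : ∀ x : l → ℝ, (W *ᵥ x) ⬝ᵥ (W *ᵥ x) ≤ c ^ 2 * (x ⬝ᵥ x)) :
    trace (Wᵀ * M) ≤ c * nuclearNorm M := by
  have e1 : ∀ (X Y : Matrix k l ℝ), trace (Xᵀ * Y) = ∑ i, ∑ r, X r i * Y r i := by
    intro X Y
    simp [trace, diag_apply, mul_apply, transpose_apply]
  have htr : trace (Wᵀ * M) = ∑ i, (W *ᵥ qcol M i) ⬝ᵥ (M *ᵥ qcol M i) := by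
    have h1 : trace (Wᵀ * M) = trace ((W * Qm M)ᵀ * (M * Qm M)) := by
      calc trace (Wᵀ * M) = trace ((Qm M)ᵀ * (Wᵀ * M) * Qm M) := by
            rw [trace_mul_cycle, Qm_orth', one_mul]
        _ = trace ((W * Qm M)ᵀ * (M * Qm M)) := by
            rw [transpose_mul]
            congr 1
            simp only [Matrix.mul_assoc]
    rw [h1, e1]
    apply Finset.sum_congr rfl
    intro i _
    simp [dotProduct, mulVec, mul_apply, qcol]
  rw [htr, nuclearNorm_def, Finset.mul_sum]
  apply Finset.sum_le_sum
  intro i _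
  calc (W *ᵥ qcol M i) ⬝ᵥ (M *ᵥ qcol M i)
      ≤ Real.sqrt ((W *ᵥ qcol M i) ⬝ᵥ (W *ᵥ qcol M i)) *
        Real.sqrt ((M *ᵥ qcol M i) ⬝ᵥ (M *ᵥ qcol M i)) := dotProduct_le_sqrt _ _
    _ ≤ Real.sqrt (c ^ 2 * 1) * Real.sqrt (ev M i) := by
        rw [mulVec_qcol_quad]
        gcongr
        calc (W *ᵥ qcol M i) ⬝ᵥ (W *ᵥ qcol M i) ≤ c ^ 2 * (qcol M i ⬝ᵥ qcol M i) := hW _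
          _ = c ^ 2 * 1 := by rw [qcol_unit]
    _ = c * Real.sqrt (ev M i) := by
        rw [mul_one, Real.sqrt_sq hc]

lemma quad_decomp (W : Matrix k l ℝ) (z : l → ℝ) :
    (W *ᵥ z) ⬝ᵥ (W *ᵥ z) = ∑ i, ev W i * (((Qm W)ᵀ *ᵥ z) i) ^ 2 := by
  rw [dot_mulVec_self, H_decomp, quad_conj]

lemma dot_decomp (W : Matrix k l ℝ) (z : l → ℝ) :
    z ⬝ᵥ z = ∑ i, (((Qm W)ᵀ *ᵥ z) i) ^ 2 := dot_conj _ (Qm_orth' W) z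

lemma iSup_ev_nonneg (W : Matrix k l ℝ) [Nonempty l] : 0 ≤ ⨆ i, ev W i :=
  le_trans (ev_nonneg W (Classical.arbitrary l))
    (le_ciSup (Set.Finite.bddAbove (Set.finite_range _)) _)

lemma mulVec_quad_le (W : Matrix k l ℝ) (x : l → ℝ) :
    (W *ᵥ x) ⬝ᵥ (W *ᵥ x) ≤ matSpectralNorm W ^ 2 * (x ⬝ᵥ x) := by
  rcases isEmpty_or_nonempty l with hl | hl
  · have h0 : W *ᵥ x = 0 := by ext r; simp [mulVec, dotProduct]
    have h1 : x ⬝ᵥ x = 0 := by simp [dotProduct]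
    simp [h0, h1]
  · rw [quad_decomp, dot_decomp W, matSpectralNorm_def, Real.sq_sqrt (iSup_ev_nonneg W),
      Finset.mul_sum]
    apply Finset.sum_le_sum
    intro i _
    exact mul_le_mul_of_nonneg_right
      (le_ciSup (Set.Finite.bddAbove (Set.finite_range (ev W))) i) (sq_nonneg _)

lemma spectral_le (W : Matrix k l ℝ) {c : ℝ} (hc : 0 ≤ c)
    (hW : ∀ x : l → ℝ, (W *ᵥ x) ⬝ᵥ (W *ᵥ x) ≤ c ^ 2 * (x ⬝ᵥ x)) :
    matSpectralNorm W ≤ c := by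
  rw [matSpectralNorm_def]
  rcases isEmpty_or_nonempty l with hl | hl
  · rw [Real.iSup_of_isEmpty, Real.sqrt_zero]; exact hc
  · have h : (⨆ i, ev W i) ≤ c ^ 2 := by
      apply ciSup_le
      intro i
      have h2 := hW (qcol W i)
      rw [mulVec_qcol_quad, qcol_unit, mul_one] at h2
      exact h2
    calc Real.sqrt (⨆ i, ev W i) ≤ Real.sqrt (c ^ 2) := Real.sqrt_le_sqrt h
      _ = c := Real.sqrt_sq hc

lemma spectral_ge (W : Matrix k l ℝ) {t : ℝ} (x : l → ℝ) (hx : x ⬝ᵥ x ≤ 1)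
    (ht : t ≤ (W *ᵥ x) ⬝ᵥ (W *ᵥ x)) : t ≤ matSpectralNorm W ^ 2 := by
  have h := mulVec_quad_le W x
  nlinarith [matSpectralNorm_nonneg W, sq_nonneg (matSpectralNorm W)]

-- isometry facts
lemma isometry_dot {a b : Type*} [Fintype a] [Fintype b] [DecidableEq a] [DecidableEq b]
    (U : Matrix a b ℝ)
    (hU : Uᵀ * U = 1) (z : b → ℝ) : (U *ᵥ z) ⬝ᵥ (U *ᵥ z) = z ⬝ᵥ z := by
  rw [dot_mulVec_self, hU, one_mulVec]

lemma coisometry_contract {a b : Type*} [Fintype a] [Fintype b] [DecidableEq a] [DecidableEq b]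
    (V : Matrix a b ℝ)
    (hV : Vᵀ * V = 1) (y : a → ℝ) :
    (Vᵀ *ᵥ y) ⬝ᵥ (Vᵀ *ᵥ y) ≤ y ⬝ᵥ y := by
  have h := dot_self_nonneg (y - V *ᵥ (Vᵀ *ᵥ y))
  have h1 : (V *ᵥ (Vᵀ *ᵥ y)) ⬝ᵥ (V *ᵥ (Vᵀ *ᵥ y)) = (Vᵀ *ᵥ y) ⬝ᵥ (Vᵀ *ᵥ y) :=
    isometry_dot V hV _
  have h2 : y ⬝ᵥ (V *ᵥ (Vᵀ *ᵥ y)) = (Vᵀ *ᵥ y) ⬝ᵥ (Vᵀ *ᵥ y) := by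
    rw [dotProduct_mulVec, ← mulVec_transpose]
  have h3 : (V *ᵥ (Vᵀ *ᵥ y)) ⬝ᵥ y = (Vᵀ *ᵥ y) ⬝ᵥ (Vᵀ *ᵥ y) := by
    rw [dotProduct_comm]; exact h2
  rw [dotProduct_sub, sub_dotProduct, sub_dotProduct, h1, h2, h3] at h
  linarith

lemma polar_block_contract {a b r : Type*} [Fintype a] [Fintype b] [Fintype r]
    [DecidableEq a] [DecidableEq b] [DecidableEq r]
    (U : Matrix a r ℝ) (V : Matrix b r ℝ) (hU : Uᵀ * U = 1) (hV : Vᵀ * V = 1)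
    (z : b → ℝ) : ((U * Vᵀ) *ᵥ z) ⬝ᵥ ((U * Vᵀ) *ᵥ z) ≤ z ⬝ᵥ z := by
  rw [← mulVec_mulVec, isometry_dot U hU]
  exact coisometry_contract V hV z

lemma trace_eq_sum_cols (W M : Matrix k l ℝ) :
    trace (Wᵀ * M) = ∑ i, (W *ᵥ qcol M i) ⬝ᵥ (M *ᵥ qcol M i) := by
  have e1 : ∀ (X Y : Matrix k l ℝ), trace (Xᵀ * Y) = ∑ i, ∑ r, X r i * Y r i := by
    intro X Y
    simp [trace, diag_apply, mul_apply, transpose_apply]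
  have h1 : trace (Wᵀ * M) = trace ((W * Qm M)ᵀ * (M * Qm M)) := by
    calc trace (Wᵀ * M) = trace ((Qm M)ᵀ * (Wᵀ * M) * Qm M) := by
          rw [trace_mul_cycle, Qm_orth', one_mul]
      _ = trace ((W * Qm M)ᵀ * (M * Qm M)) := by
          rw [transpose_mul]
          congr 1
          simp only [Matrix.mul_assoc]
  rw [h1, e1]
  apply Finset.sum_congr rfl
  intro i _
  simp [dotProduct, mulVec, mul_apply, qcol]

noncomputable def gP (M : Matrix k l ℝ) : l → ℝ :=
  fun i => if ev M i = 0 then 0 else (Real.sqrt (ev M i))⁻¹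

noncomputable def polar (M : Matrix k l ℝ) : Matrix k l ℝ :=
  M * Qm M * diagonal (gP M) * (Qm M)ᵀ

lemma gP_mul_ev (M : Matrix k l ℝ) (i : l) : gP M i * ev M i = Real.sqrt (ev M i) := by
  by_cases h : ev M i = 0
  · simp [gP, h]
  · have hp : 0 < ev M i := lt_of_le_of_ne (ev_nonneg M i) (Ne.symm h)
    have hs : 0 < Real.sqrt (ev M i) := Real.sqrt_pos.mpr hp
    rw [gP, if_neg h, inv_mul_eq_iff_eq_mul₀ hs.ne', Real.mul_self_sqrt hp.le]

lemma ev_mul_gP_sq (M : Matrix k l ℝ) (i : l) : ev M i * gP M i ^ 2 ≤ 1 := by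
  by_cases h : ev M i = 0
  · simp [gP, h]
  · have hp : 0 < ev M i := lt_of_le_of_ne (ev_nonneg M i) (Ne.symm h)
    rw [gP, if_neg h, inv_pow, Real.sq_sqrt hp.le, mul_inv_cancel₀ hp.ne']

lemma Qmt_mulVec_qcol (M : Matrix k l ℝ) (i : l) :
    (Qm M)ᵀ *ᵥ qcol M i = Pi.single i 1 := by
  ext j
  have h := congrFun (congrFun (Qm_orth M) j) i
  simp only [mul_apply, transpose_apply, one_apply] at h
  simp only [mulVec, dotProduct, transpose_apply, qcol, Pi.single_apply]
  rw [h]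

lemma polar_mulVec (M : Matrix k l ℝ) (x : l → ℝ) :
    polar M *ᵥ x = M *ᵥ (Qm M *ᵥ (diagonal (gP M) *ᵥ ((Qm M)ᵀ *ᵥ x))) := by
  simp only [polar, ← mulVec_mulVec]

lemma polar_mulVec_qcol (M : Matrix k l ℝ) (i : l) :
    polar M *ᵥ qcol M i = gP M i • (M *ᵥ qcol M i) := by
  rw [polar_mulVec, Qmt_mulVec_qcol, diagonal_mulVec_single, mul_one]
  have h1 : Qm M *ᵥ Pi.single i (gP M i) = gP M i • qcol M i := by
    rw [mulVec_single]
    ext r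
    simp [qcol, mul_comm]
  rw [h1, mulVec_smul]

lemma trace_polar (M : Matrix k l ℝ) : trace ((polar M)ᵀ * M) = nuclearNorm M := by
  rw [trace_eq_sum_cols, nuclearNorm_def]
  apply Finset.sum_congr rfl
  intro i _
  rw [polar_mulVec_qcol, smul_dotProduct, mulVec_qcol_quad, smul_eq_mul, gP_mul_ev]

lemma polar_contract (M : Matrix k l ℝ) (z : l → ℝ) :
    (polar M *ᵥ z) ⬝ᵥ (polar M *ᵥ z) ≤ z ⬝ᵥ z := by
  rw [polar_mulVec, quad_decomp]
  have h1 : (Qm M)ᵀ *ᵥ (Qm M *ᵥ (diagonal (gP M) *ᵥ ((Qm M)ᵀ *ᵥ z)))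
      = diagonal (gP M) *ᵥ ((Qm M)ᵀ *ᵥ z) := by
    rw [mulVec_mulVec, Qm_orth, one_mulVec]
  rw [h1, dot_decomp M z]
  apply Finset.sum_le_sum
  intro i _
  rw [mulVec_diagonal]
  have := ev_mul_gP_sq M i
  nlinarith [sq_nonneg (((Qm M)ᵀ *ᵥ z) i), ev_nonneg M i, sq_nonneg (gP M i)]

lemma trace_polar_svd {r : Type*} [Fintype r] [DecidableEq r]
    (U : Matrix k r ℝ) (S : Matrix r r ℝ) (V : Matrix l r ℝ)
    (hU : Uᵀ * U = 1) (hV : Vᵀ * V = 1) :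
    trace ((U * Vᵀ)ᵀ * (U * S * Vᵀ)) = trace S := by
  have h1 : (U * Vᵀ)ᵀ * (U * S * Vᵀ) = V * ((Uᵀ * U) * (S * Vᵀ)) := by
    rw [transpose_mul, transpose_transpose]
    simp only [Matrix.mul_assoc]
  rw [h1, hU, Matrix.one_mul, trace_mul_comm, Matrix.mul_assoc, hV, Matrix.mul_one]

lemma trace_mul_svd_le {r : Type*} [Fintype r] [DecidableEq r]
    (W : Matrix k l ℝ) (hW : ∀ z : l → ℝ, (W *ᵥ z) ⬝ᵥ (W *ᵥ z) ≤ z ⬝ᵥ z)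
    (U : Matrix k r ℝ) (S : Matrix r r ℝ) (V : Matrix l r ℝ)
    (hU : Uᵀ * U = 1) (hV : Vᵀ * V = 1)
    (hSd : ∀ i j, i ≠ j → S i j = 0) (hSp : ∀ i, 0 ≤ S i i) :
    trace (Wᵀ * (U * S * Vᵀ)) ≤ trace S := by
  have h1 : trace (Wᵀ * (U * S * Vᵀ)) = trace ((Vᵀ * (Wᵀ * U)) * S) := by
    rw [show Wᵀ * (U * S * Vᵀ) = (Wᵀ * U * S) * Vᵀ by simp only [Matrix.mul_assoc],
      trace_mul_comm]
    congr 1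
    simp only [Matrix.mul_assoc]
  have h2 : trace ((Vᵀ * (Wᵀ * U)) * S) = ∑ i, (Vᵀ * (Wᵀ * U)) i i * S i i := by
    rw [trace]
    apply Finset.sum_congr rfl
    intro i _
    rw [diag_apply, mul_apply, Finset.sum_eq_single i]
    · intro j _ hj
      rw [hSd j i hj, mul_zero]
    · intro hh
      exact absurd (Finset.mem_univ i) hh
  rw [h1, h2, trace]
  apply Finset.sum_le_sum
  intro i _
  have hyii : (Vᵀ * (Wᵀ * U)) i i = (W *ᵥ (fun p => V p i)) ⬝ᵥ (fun q => U q i) := by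
    simp only [mul_apply, transpose_apply, mulVec, dotProduct, Finset.mul_sum, Finset.sum_mul]
    rw [Finset.sum_comm]
    apply Finset.sum_congr rfl
    intro q _
    apply Finset.sum_congr rfl
    intro p _
    ring
  have hv := col_unit V hV i
  have hu := col_unit U hU i
  have hb : (W *ᵥ (fun p => V p i)) ⬝ᵥ (fun q => U q i) ≤ 1 := by
    calc (W *ᵥ (fun p => V p i)) ⬝ᵥ (fun q => U q i)
        ≤ Real.sqrt ((W *ᵥ (fun p => V p i)) ⬝ᵥ (W *ᵥ (fun p => V p i))) *
          Real.sqrt ((fun q => U q i) ⬝ᵥ (fun q => U q i)) := dotProduct_le_sqrt _ _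
      _ ≤ Real.sqrt ((fun p => V p i) ⬝ᵥ (fun p => V p i)) *
          Real.sqrt ((fun q => U q i) ⬝ᵥ (fun q => U q i)) := by
          gcongr
          exact hW _
      _ = 1 := by rw [hv, hu, Real.sqrt_one, mul_one]
  have := mul_le_mul_of_nonneg_right hb (hSp i)
  simpa [diag_apply, hyii] using this

lemma nuclear_eq {r : Type*} [Fintype r] [DecidableEq r]
    (U : Matrix k r ℝ) (S : Matrix r r ℝ) (V : Matrix l r ℝ)
    (hU : Uᵀ * U = 1) (hV : Vᵀ * V = 1)
    (hSd : ∀ i j, i ≠ j → S i j = 0) (hSp : ∀ i, 0 ≤ S i i) :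
    nuclearNorm (U * S * Vᵀ) = trace S := by
  apply le_antisymm
  · rw [← trace_polar (U * S * Vᵀ)]
    exact trace_mul_svd_le _ (polar_contract _) U S V hU hV hSd hSp
  · calc trace S = trace ((U * Vᵀ)ᵀ * (U * S * Vᵀ)) := (trace_polar_svd U S V hU hV).symm
      _ ≤ 1 * nuclearNorm (U * S * Vᵀ) := by
          apply trace_transpose_mul_le _ _ zero_le_one
          intro x
          simpa using polar_block_contract U V hU hV x
      _ = nuclearNorm (U * S * Vᵀ) := one_mul _

lemma trace_formula (X Y : Matrix k l ℝ) :
    trace (Xᵀ * Y) = ∑ i, ∑ r, X r i * Y r i := by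
  simp [trace, diag_apply, mul_apply, transpose_apply]

lemma trace_fromCols {a b : Type*} [Fintype a] [Fintype b]
    (W : Matrix k a ℝ) (X : Matrix k b ℝ) (Z : Matrix k a ℝ) (T : Matrix k b ℝ) :
    trace ((fromCols W X)ᵀ * fromCols Z T) = trace (Wᵀ * Z) + trace (Xᵀ * T) := by
  rw [transpose_fromCols, fromRows_mul_fromCols]
  simp [trace, Fintype.sum_sum_type, fromBlocks]

lemma sum_elim_dot {a b : Type*} [Fintype a] [Fintype b] (u x : a → ℝ) (v y : b → ℝ) :
    Sum.elim u v ⬝ᵥ Sum.elim x y = u ⬝ᵥ x + v ⬝ᵥ y := by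
  simp [dotProduct, Fintype.sum_sum_type]

lemma submatrix_perm_mulVec {a : Type*} [Fintype a] (X : Matrix k a ℝ) (σ : Equiv.Perm k)
    (v : a → ℝ) : (X.submatrix σ id) *ᵥ v = fun i => (X *ᵥ v) (σ i) := by
  ext i
  simp [mulVec, dotProduct, submatrix_apply]

lemma submatrix_perm_dot {a : Type*} [Fintype a] (X : Matrix k a ℝ) (σ : Equiv.Perm k)
    (v : a → ℝ) :
    ((X.submatrix σ id) *ᵥ v) ⬝ᵥ ((X.submatrix σ id) *ᵥ v) = (X *ᵥ v) ⬝ᵥ (X *ᵥ v) := by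
  rw [submatrix_perm_mulVec]
  exact Equiv.sum_comp σ (fun i => (X *ᵥ v) i * (X *ᵥ v) i)

lemma trace_perm_pair {a : Type*} [Fintype a] [DecidableEq a] (X Y : Matrix k a ℝ) (σ : Equiv.Perm k) :
    trace ((X.submatrix σ id)ᵀ * (Y.submatrix σ id)) = trace (Xᵀ * Y) := by
  rw [trace_formula, trace_formula]
  apply Finset.sum_congr rfl
  intro i _
  exact Equiv.sum_comp σ (fun r => X r i * Y r i)

lemma trace_perm_shift {a : Type*} [Fintype a] [DecidableEq a] (X Y : Matrix k a ℝ) (σ : Equiv.Perm k) :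
    trace (Xᵀ * (Y.submatrix σ id)) = trace ((X.submatrix σ.symm id)ᵀ * Y) := by
  rw [trace_formula, trace_formula]
  apply Finset.sum_congr rfl
  intro i _
  rw [← Equiv.sum_comp σ (fun r => X.submatrix σ.symm id r i * Y r i)]
  simp [submatrix_apply]

lemma single_dot {a : Type*} [Fintype a] [DecidableEq a] (i : a) :
    (Pi.single i 1 : a → ℝ) ⬝ᵥ Pi.single i 1 = 1 := by
  simp [dotProduct, Pi.single_apply]

lemma dot_add_le (u v : k → ℝ) :
    (u + v) ⬝ᵥ (u + v) ≤ 2 * (u ⬝ᵥ u) + 2 * (v ⬝ᵥ v) := by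
  have h := dot_self_nonneg (u - v)
  have e1 : (u - v) ⬝ᵥ (u - v) = u ⬝ᵥ u - u ⬝ᵥ v - v ⬝ᵥ u + v ⬝ᵥ v := by
    simp [dotProduct_sub, sub_dotProduct]
    ring
  have e2 : (u + v) ⬝ᵥ (u + v) = u ⬝ᵥ u + u ⬝ᵥ v + v ⬝ᵥ u + v ⬝ᵥ v := by
    simp [dotProduct_add, add_dotProduct]
    ring
  linarith [e1 ▸ h]

end NukeProof


open NukeProof in
/-- If `A = U_A Σ_A V_Aᵀ` and `B = U_B Σ_B V_Bᵀ` are compact SVDs and `P` is a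
permutation matrix, then
`‖A‖_* + ‖B‖_* ≥ ‖[A, PB]‖_* ≥ (‖A‖_* + ‖B‖_*)/‖[U_A V_Aᵀ, P U_B V_Bᵀ]‖ ≥ (‖A‖_* + ‖B‖_*)/√2`. -/
theorem nuclearNorm_perm_concat_bounds {n mA mB rA rB : ℕ}
    (A : Matrix (Fin n) (Fin mA) ℝ) (B : Matrix (Fin n) (Fin mB) ℝ)
    (UA : Matrix (Fin n) (Fin rA) ℝ) (SA : Matrix (Fin rA) (Fin rA) ℝ)
    (VA : Matrix (Fin mA) (Fin rA) ℝ)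
    (UB : Matrix (Fin n) (Fin rB) ℝ) (SB : Matrix (Fin rB) (Fin rB) ℝ)
    (VB : Matrix (Fin mB) (Fin rB) ℝ)
    (hUA : UAᵀ * UA = 1) (hVA : VAᵀ * VA = 1)
    (hSAd : ∀ i j, i ≠ j → SA i j = 0) (hSAp : ∀ i, 0 < SA i i)
    (hA : A = UA * SA * VAᵀ)
    (hUB : UBᵀ * UB = 1) (hVB : VBᵀ * VB = 1)
    (hSBd : ∀ i j, i ≠ j → SB i j = 0) (hSBp : ∀ i, 0 < SB i i)
    (hB : B = UB * SB * VBᵀ)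
    (σ : Equiv.Perm (Fin n)) :
    nuclearNorm A + nuclearNorm B ≥ nuclearNorm (fromCols A (B.submatrix σ id)) ∧
      nuclearNorm (fromCols A (B.submatrix σ id)) ≥
        (nuclearNorm A + nuclearNorm B) /
          matSpectralNorm (fromCols (UA * VAᵀ) ((UB * VBᵀ).submatrix σ id)) ∧
      (nuclearNorm A + nuclearNorm B) /
          matSpectralNorm (fromCols (UA * VAᵀ) ((UB * VBᵀ).submatrix σ id)) ≥
        (nuclearNorm A + nuclearNorm B) / Real.sqrt 2 := by
  classical
  set M : Matrix (Fin n) (Fin mA ⊕ Fin mB) ℝ := fromCols A (B.submatrix σ id) with hM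
  set W : Matrix (Fin n) (Fin mA ⊕ Fin mB) ℝ :=
    fromCols (UA * VAᵀ) ((UB * VBᵀ).submatrix σ id) with hWdef
  have hSAp' : ∀ i, 0 ≤ SA i i := fun i => (hSAp i).le
  have hSBp' : ∀ i, 0 ≤ SB i i := fun i => (hSBp i).le
  have hnA : nuclearNorm A = trace SA := by
    rw [hA]; exact nuclear_eq UA SA VA hUA hVA hSAd hSAp'
  have hnB : nuclearNorm B = trace SB := by
    rw [hB]; exact nuclear_eq UB SB VB hUB hVB hSBd hSBp'
  have hW1 : ∀ z : Fin mA → ℝ, ((UA * VAᵀ) *ᵥ z) ⬝ᵥ ((UA * VAᵀ) *ᵥ z) ≤ z ⬝ᵥ z :=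
    polar_block_contract UA VA hUA hVA
  have hW2 : ∀ z : Fin mB → ℝ,
      (((UB * VBᵀ).submatrix σ id) *ᵥ z) ⬝ᵥ (((UB * VBᵀ).submatrix σ id) *ᵥ z) ≤ z ⬝ᵥ z := by
    intro z
    rw [submatrix_perm_dot]
    exact polar_block_contract UB VB hUB hVB z
  have hWc : ∀ x : Fin mA ⊕ Fin mB → ℝ,
      (W *ᵥ x) ⬝ᵥ (W *ᵥ x) ≤ Real.sqrt 2 ^ 2 * (x ⬝ᵥ x) := by
    intro x
    have hx : x = Sum.elim (x ∘ Sum.inl) (x ∘ Sum.inr) := by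
      ext (i | i) <;> rfl
    rw [Real.sq_sqrt (by norm_num : (0:ℝ) ≤ 2)]
    conv_lhs => rw [hx]
    rw [hWdef, fromCols_mulVec_sumElim]
    calc ((UA * VAᵀ) *ᵥ (x ∘ Sum.inl) + ((UB * VBᵀ).submatrix σ id) *ᵥ (x ∘ Sum.inr)) ⬝ᵥ
          ((UA * VAᵀ) *ᵥ (x ∘ Sum.inl) + ((UB * VBᵀ).submatrix σ id) *ᵥ (x ∘ Sum.inr))
        ≤ 2 * (((UA * VAᵀ) *ᵥ (x ∘ Sum.inl)) ⬝ᵥ ((UA * VAᵀ) *ᵥ (x ∘ Sum.inl)))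
          + 2 * ((((UB * VBᵀ).submatrix σ id) *ᵥ (x ∘ Sum.inr)) ⬝ᵥ
              (((UB * VBᵀ).submatrix σ id) *ᵥ (x ∘ Sum.inr))) := dot_add_le _ _
      _ ≤ 2 * ((x ∘ Sum.inl) ⬝ᵥ (x ∘ Sum.inl)) + 2 * ((x ∘ Sum.inr) ⬝ᵥ (x ∘ Sum.inr)) := by
          have h1 := hW1 (x ∘ Sum.inl)
          have h2 := hW2 (x ∘ Sum.inr)
          linarith
      _ = 2 * (x ⬝ᵥ x) := by
          conv_rhs => rw [hx, sum_elim_dot]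
          ring
  have htr : trace (Wᵀ * M) = trace SA + trace SB := by
    rw [hWdef, hM, trace_fromCols, trace_perm_pair]
    congr 1
    · rw [hA]; exact trace_polar_svd UA SA VA hUA hVA
    · rw [hB]; exact trace_polar_svd UB SB VB hUB hVB
  have part1 : nuclearNorm M ≤ nuclearNorm A + nuclearNorm B := by
    have hP := polar_contract M
    set P := polar M with hPdef
    have hPsplit : P = fromCols (toCols₁ P) (toCols₂ P) := (fromCols_toCols P).symm
    have hc1 : ∀ z : Fin mA → ℝ, ((toCols₁ P) *ᵥ z) ⬝ᵥ ((toCols₁ P) *ᵥ z) ≤ z ⬝ᵥ z := by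
      intro z
      have h1 : (toCols₁ P) *ᵥ z = P *ᵥ Sum.elim z 0 := by
        conv_rhs => rw [hPsplit]
        rw [fromCols_mulVec_sumElim, mulVec_zero, add_zero]
      rw [h1]
      calc (P *ᵥ Sum.elim z 0) ⬝ᵥ (P *ᵥ Sum.elim z 0)
          ≤ Sum.elim z (0 : Fin mB → ℝ) ⬝ᵥ Sum.elim z 0 := hP _
        _ = z ⬝ᵥ z := by rw [sum_elim_dot]; simp
    have hc2 : ∀ z : Fin mB → ℝ,
        (((toCols₂ P).submatrix σ.symm id) *ᵥ z) ⬝ᵥ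
          (((toCols₂ P).submatrix σ.symm id) *ᵥ z) ≤ z ⬝ᵥ z := by
      intro z
      rw [submatrix_perm_dot]
      have h1 : (toCols₂ P) *ᵥ z = P *ᵥ Sum.elim 0 z := by
        conv_rhs => rw [hPsplit]
        rw [fromCols_mulVec_sumElim, mulVec_zero, zero_add]
      rw [h1]
      calc (P *ᵥ Sum.elim 0 z) ⬝ᵥ (P *ᵥ Sum.elim 0 z)
          ≤ Sum.elim (0 : Fin mA → ℝ) z ⬝ᵥ Sum.elim 0 z := hP _
        _ = z ⬝ᵥ z := by rw [sum_elim_dot]; simp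
    calc nuclearNorm M = trace (Pᵀ * M) := (trace_polar M).symm
      _ = trace ((toCols₁ P)ᵀ * A) + trace ((toCols₂ P)ᵀ * (B.submatrix σ id)) := by
          conv_lhs => rw [hPsplit, hM]
          exact trace_fromCols _ _ _ _
      _ ≤ trace SA + trace SB := by
          apply add_le_add
          · rw [hA]; exact trace_mul_svd_le _ hc1 UA SA VA hUA hVA hSAd hSAp'
          · rw [trace_perm_shift, hB]
            exact trace_mul_svd_le _ hc2 UB SB VB hUB hVB hSBd hSBp'
      _ = nuclearNorm A + nuclearNorm B := by rw [hnA, hnB]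
  have part2 : (nuclearNorm A + nuclearNorm B) / matSpectralNorm W ≤ nuclearNorm M := by
    have hle : trace (Wᵀ * M) ≤ matSpectralNorm W * nuclearNorm M :=
      trace_transpose_mul_le W M (matSpectralNorm_nonneg W) (mulVec_quad_le W)
    rw [htr] at hle
    rcases eq_or_lt_of_le (matSpectralNorm_nonneg W) with h0 | h0
    · rw [← h0, div_zero]; exact nuclearNorm_nonneg M
    · rw [hnA, hnB, div_le_iff₀ h0, mul_comm]
      exact hle
  have hs0 : 0 ≤ nuclearNorm A + nuclearNorm B :=
    add_nonneg (nuclearNorm_nonneg A) (nuclearNorm_nonneg B)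
  have part3 : (nuclearNorm A + nuclearNorm B) / Real.sqrt 2 ≤
      (nuclearNorm A + nuclearNorm B) / matSpectralNorm W := by
    rcases eq_or_lt_of_le hs0 with h0 | h0
    · rw [← h0, zero_div, zero_div]
    · have hub : matSpectralNorm W ≤ Real.sqrt 2 := spectral_le W (Real.sqrt_nonneg 2) hWc
      have hpos : 0 < matSpectralNorm W := by
        have hAB : 0 < trace SA ∨ 0 < trace SB := by
          by_contra hcon
          push_neg at hcon
          have h1 : trace SA = 0 :=
            le_antisymm hcon.1 (Finset.sum_nonneg fun i _ => hSAp' i)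
          have h2 : trace SB = 0 :=
            le_antisymm hcon.2 (Finset.sum_nonneg fun i _ => hSBp' i)
          rw [hnA, hnB, h1, h2, add_zero] at h0
          exact lt_irrefl 0 h0
        have key : (1:ℝ) ≤ matSpectralNorm W ^ 2 := by
          rcases hAB with h | h
          · have hne : Nonempty (Fin rA) := by
              by_contra hne
              rw [not_nonempty_iff] at hne
              simp [trace] at h
            obtain ⟨i0⟩ := hne
            apply spectral_ge W (Sum.elim (VA *ᵥ Pi.single i0 1) (0 : Fin mB → ℝ))
            · rw [sum_elim_dot, isometry_dot VA hVA, single_dot]; simp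
            · rw [hWdef, fromCols_mulVec_sumElim, mulVec_zero, add_zero, mulVec_mulVec]
              rw [show UA * VAᵀ * VA = UA by rw [Matrix.mul_assoc, hVA, Matrix.mul_one]]
              rw [isometry_dot UA hUA, single_dot]
          · have hne : Nonempty (Fin rB) := by
              by_contra hne
              rw [not_nonempty_iff] at hne
              simp [trace] at h
            obtain ⟨i0⟩ := hne
            apply spectral_ge W (Sum.elim (0 : Fin mA → ℝ) (VB *ᵥ Pi.single i0 1))
            · rw [sum_elim_dot, isometry_dot VB hVB, single_dot]; simp
            · rw [hWdef, fromCols_mulVec_sumElim, mulVec_zero, zero_add,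
                submatrix_perm_dot, mulVec_mulVec]
              rw [show UB * VBᵀ * VB = UB by rw [Matrix.mul_assoc, hVB, Matrix.mul_one]]
              rw [isometry_dot UB hUB, single_dot]
        nlinarith [matSpectralNorm_nonneg W]
      exact div_le_div_of_nonneg_left hs0 hpos hub
  exact ⟨part1, part2, part3⟩
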